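/- Let a, b be points in the open unit disk, nonzero, non-collinear with 0, with |a| ≠ |b|, and let c = (a − b + ab(conj(a)−conj(b)))/(|a|² − |b|²). Then |c| > 1, and the two intersection points of the unit circle S(0,1) with the circle S(c, √(|c|²−1)) are z = (1 ± i√(|c|²−1))/conj(c); that is, these two points z satisfy |z| = 1 and |z − c|² = |c|² − 1. -/

import Mathlib

open Complex

lemma aux_pt (c : ℂ) (hc : 1 < ‖c‖) (t : ℝ) (ht : t ^ 2 = ‖c‖ ^ 2 - 1) :
    ‖(1 + Complex.I * (t : ℂ)) / starRingEnd ℂ c‖ = 1 ∧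
    ‖(1 + Complex.I * (t : ℂ)) / starRingEnd ℂ c - c‖ ^ 2 = ‖c‖ ^ 2 - 1 := by
  have hc0 : c ≠ 0 := by
    intro h; rw [h] at hc; simp at hc; linarith
  have hconj : starRingEnd ℂ c ≠ 0 := by simpa using hc0
  have habs : (0:ℝ) < ‖c‖ := lt_trans one_pos hc
  have hnum : Complex.normSq (1 + Complex.I * (t : ℂ)) = 1 + t ^ 2 := by
    simp [Complex.normSq_apply]
    ring
  have gen : ∀ x s : ℝ, Complex.normSq (1 + Complex.I * (s : ℂ) - (x : ℂ)) = (1 - x) ^ 2 + s ^ 2 := by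
    intro x s
    simp [Complex.normSq_apply]
    ring
  constructor
  · have h1 : ‖(1 + Complex.I * (t : ℂ)) / starRingEnd ℂ c‖ ^ 2 = 1 := by
      rw [Complex.sq_norm, map_div₀, Complex.normSq_conj, hnum, ht, ← Complex.sq_norm]
      field_simp
      ring
    nlinarith [norm_nonneg ((1 + Complex.I * (t : ℂ)) / starRingEnd ℂ c)]
  · have hcc : c * starRingEnd ℂ c = ((‖c‖ ^ 2 : ℝ) : ℂ) := by
      rw [Complex.mul_conj]
      norm_cast
      exact (Complex.sq_norm c).symm
    have hz : (1 + Complex.I * (t : ℂ)) / starRingEnd ℂ c - c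
        = (1 + Complex.I * (t : ℂ) - ((‖c‖ ^ 2 : ℝ) : ℂ)) / starRingEnd ℂ c := by
      rw [← hcc]; field_simp
    rw [hz, Complex.sq_norm, map_div₀, Complex.normSq_conj]
    rw [gen, ht, ← Complex.sq_norm]
    have h2 : ‖c‖ ^ 2 ≠ 0 := by positivity
    field_simp
    ring

theorem orthogonal_circle_intersection (a b : ℂ)
    (ha0 : a ≠ 0) (hb0 : b ≠ 0)
    (ha : ‖a‖ < 1) (hb : ‖b‖ < 1)
    (hne : ‖a‖ ≠ ‖b‖)
    (hnc : ¬ Collinear ℝ ({0, a, b} : Set ℂ)) :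
    let c := (a - b + a * b * (starRingEnd ℂ a - starRingEnd ℂ b)) /
      ((‖a‖ ^ 2 - ‖b‖ ^ 2 : ℝ) : ℂ)
    1 < ‖c‖ ∧
      ∀ z : ℂ, (z = (1 + Complex.I * (Real.sqrt (‖c‖ ^ 2 - 1) : ℝ)) / starRingEnd ℂ c ∨
          z = (1 - Complex.I * (Real.sqrt (‖c‖ ^ 2 - 1) : ℝ)) / starRingEnd ℂ c) →
        ‖z‖ = 1 ∧ ‖z - c‖ ^ 2 = ‖c‖ ^ 2 - 1 := by
  intro c
  have hab : a ≠ b := by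
    intro h; exact hne (by rw [h])
  have hD : ‖a‖ ^ 2 - ‖b‖ ^ 2 ≠ 0 := by
    intro h
    apply hne
    nlinarith [norm_nonneg a, norm_nonneg b]
  set N := a - b + a * b * (starRingEnd ℂ a - starRingEnd ℂ b) with hN
  set D : ℝ := ‖a‖ ^ 2 - ‖b‖ ^ 2 with hDdef
  have key : Complex.normSq N = D ^ 2 + (1 - ‖a‖ ^ 2) * (1 - ‖b‖ ^ 2) * Complex.normSq (a - b) := by
    rw [hN, hDdef, Complex.sq_norm a, Complex.sq_norm b]
    simp [Complex.normSq_apply, Complex.mul_re, Complex.mul_im]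
    ring
  have hab2 : (0:ℝ) < Complex.normSq (a - b) := by
    rw [Complex.normSq_pos]; exact sub_ne_zero.mpr hab
  have h1a : (0:ℝ) < 1 - ‖a‖ ^ 2 := by nlinarith [norm_nonneg a]
  have h1b : (0:ℝ) < 1 - ‖b‖ ^ 2 := by nlinarith [norm_nonneg b]
  have hNgt : Complex.normSq N > D ^ 2 := by
    rw [key]; nlinarith [mul_pos (mul_pos h1a h1b) hab2]
  have hc2 : ‖c‖ ^ 2 > 1 := by
    have : ‖c‖ ^ 2 = Complex.normSq N / D ^ 2 := by
      rw [Complex.sq_norm, hN]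
      rw [map_div₀]
      congr 1
      rw [Complex.normSq_ofReal]
      ring
    rw [this]
    rw [gt_iff_lt, lt_div_iff₀ (by positivity)]
    linarith
  have hc : 1 < ‖c‖ := by
    nlinarith [norm_nonneg c]
  refine ⟨hc, ?_⟩
  intro z hz
  have ht : (Real.sqrt (‖c‖ ^ 2 - 1)) ^ 2 = ‖c‖ ^ 2 - 1 :=
    Real.sq_sqrt (by nlinarith)
  rcases hz with h | h
  · rw [h]; exact aux_pt c hc _ ht
  · rw [h]
    have hneg : (1 - Complex.I * ((Real.sqrt (‖c‖ ^ 2 - 1) : ℝ) : ℂ))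
        = 1 + Complex.I * ((-Real.sqrt (‖c‖ ^ 2 - 1) : ℝ) : ℂ) := by
      push_cast; ring
    rw [hneg]
    exact aux_pt c hc _ (by rw [neg_pow]; simpa using ht)
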